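/- Consider the two-step scalar control system x₁ = x₀ + u₀ + w₀u₀, x₂ = x₁ + u₁ + w₁u₁, where w₀, w₁ are independent real random variables with E[wᵢ] = 0 and E[wᵢ²] = 1, x₀ ∈ L²(Ω;ℝ) is independent of (w₀, w₁), and the cost is J(x₀,u) = E[x₂² − 2u₀² − 2u₁²]. Then for every S ∈ ℝ, the linear feedback control ū₀ = S·x₀, ū₁ = S·x₁ satisfies J(x₀,ū) = (4S³ + 4S² + 4S + 1)·E[x₀²]. In particular, if S ∈ ℝ satisfies 4S³ + 4S² + 4S + 1 = 0, then J(x₀,ū) = 0, whereas the zero control u ≡ 0 gives J(x₀,0) = E[x₀²]; hence if E[x₀²] > 0 then J(x₀,ū) < J(x₀,0). -/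

import Mathlib

open MeasureTheory ProbabilityTheory

namespace SLQExample

variable {Ω : Type} [MeasurableSpace Ω]

/-- First state `x₁ = x₀ + u₀ + w₀ u₀`. -/
def x1 (w0 x0 u0 : Ω → ℝ) : Ω → ℝ := fun ω => x0 ω + u0 ω + w0 ω * u0 ω

/-- Second state `x₂ = x₁ + u₁ + w₁ u₁`. -/
def x2 (w0 w1 x0 u0 u1 : Ω → ℝ) : Ω → ℝ :=
  fun ω => x1 w0 x0 u0 ω + u1 ω + w1 ω * u1 ω

/-- Cost `J(x₀, u) = E[x₂² − 2u₀² − 2u₁²]`. -/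
noncomputable def J (μ : Measure Ω) (w0 w1 x0 u0 u1 : Ω → ℝ) : ℝ :=
  ∫ ω, ((x2 w0 w1 x0 u0 u1 ω) ^ 2 - 2 * (u0 ω) ^ 2 - 2 * (u1 ω) ^ 2) ∂μ

lemma sq_aff_integrable (μ : Measure Ω) [IsProbabilityMeasure μ] (w : Ω → ℝ)
    (hw1 : Integrable w μ) (hw2 : Integrable (fun ω => w ω ^ 2) μ) (S : ℝ) :
    Integrable (fun ω => (1 + S + S * w ω) ^ 2) μ := by
  have h : (fun ω => (1 + S + S * w ω) ^ 2)
      = fun ω => ((1 + S) ^ 2 + (2 * (1 + S) * S) * w ω) + S ^ 2 * (w ω ^ 2) :=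
    funext fun ω => by ring
  rw [h]
  exact ((integrable_const _).add (hw1.const_mul _)).add (hw2.const_mul _)

lemma sq_aff_integral (μ : Measure Ω) [IsProbabilityMeasure μ] (w : Ω → ℝ)
    (hw1 : Integrable w μ) (hw2 : Integrable (fun ω => w ω ^ 2) μ)
    (hmean : ∫ ω, w ω ∂μ = 0) (hvar : ∫ ω, (w ω) ^ 2 ∂μ = 1) (S : ℝ) :
    ∫ ω, (1 + S + S * w ω) ^ 2 ∂μ = 1 + 2 * S + 2 * S ^ 2 := by
  have h : ∫ ω, (1 + S + S * w ω) ^ 2 ∂μ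
      = ∫ ω, (((1 + S) ^ 2 + (2 * (1 + S) * S) * w ω) + S ^ 2 * (w ω ^ 2)) ∂μ :=
    integral_congr_ae (Filter.Eventually.of_forall fun ω => by ring)
  have e1 : ∫ ω, (((1 + S) ^ 2 + (2 * (1 + S) * S) * w ω) + S ^ 2 * (w ω ^ 2)) ∂μ
      = (∫ ω, ((1 + S) ^ 2 + (2 * (1 + S) * S) * w ω) ∂μ) + ∫ ω, S ^ 2 * (w ω ^ 2) ∂μ :=
    integral_add ((integrable_const _).add (hw1.const_mul _)) (hw2.const_mul _)
  have e2 : ∫ ω, ((1 + S) ^ 2 + (2 * (1 + S) * S) * w ω) ∂μ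
      = (∫ _ω, ((1 + S) ^ 2 : ℝ) ∂μ) + ∫ ω, (2 * (1 + S) * S) * w ω ∂μ :=
    integral_add (integrable_const _) (hw1.const_mul _)
  rw [h, e1, e2, integral_const_mul, integral_const_mul, hmean, hvar]
  simp
  ring

theorem statement_0
    (μ : Measure Ω) [IsProbabilityMeasure μ]
    (w0 w1 x0 : Ω → ℝ)
    (hw0m : Measurable w0) (hw1m : Measurable w1) (hx0m : Measurable x0)
    (hindw : IndepFun w0 w1 μ)
    (hindx : IndepFun x0 (fun ω => (w0 ω, w1 ω)) μ)
    (hw0mean : ∫ ω, w0 ω ∂μ = 0) (hw1mean : ∫ ω, w1 ω ∂μ = 0)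
    (hw0var : ∫ ω, (w0 ω) ^ 2 ∂μ = 1) (hw1var : ∫ ω, (w1 ω) ^ 2 ∂μ = 1)
    (hx0L2 : MemLp x0 2 μ)
    (S : ℝ) :
    -- the feedback control ū₀ = S x₀, ū₁ = S x₁
    J μ w0 w1 x0 (fun ω => S * x0 ω) (fun ω => S * x1 w0 x0 (fun ω' => S * x0 ω') ω)
      = (4 * S ^ 3 + 4 * S ^ 2 + 4 * S + 1) * ∫ ω, (x0 ω) ^ 2 ∂μ ∧
    -- if S is a root of 4S³+4S²+4S+1 = 0, the cost of the feedback control vanishes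
    (4 * S ^ 3 + 4 * S ^ 2 + 4 * S + 1 = 0 →
      J μ w0 w1 x0 (fun ω => S * x0 ω) (fun ω => S * x1 w0 x0 (fun ω' => S * x0 ω') ω) = 0) ∧
    -- the zero control has cost E[x₀²]
    J μ w0 w1 x0 (fun _ => 0) (fun _ => 0) = ∫ ω, (x0 ω) ^ 2 ∂μ ∧
    -- hence the feedback control strictly beats the zero control when E[x₀²] > 0
    (4 * S ^ 3 + 4 * S ^ 2 + 4 * S + 1 = 0 → 0 < ∫ ω, (x0 ω) ^ 2 ∂μ →
      J μ w0 w1 x0 (fun ω => S * x0 ω) (fun ω => S * x1 w0 x0 (fun ω' => S * x0 ω') ω)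
        < J μ w0 w1 x0 (fun _ => 0) (fun _ => 0)) := by
  -- integrability facts
  have hw0sq : Integrable (fun ω => w0 ω ^ 2) μ := by
    by_contra h
    rw [integral_undef h] at hw0var
    norm_num at hw0var
  have hw1sq : Integrable (fun ω => w1 ω ^ 2) μ := by
    by_contra h
    rw [integral_undef h] at hw1var
    norm_num at hw1var
  have hw0L2 : MemLp w0 2 μ :=
    (memLp_two_iff_integrable_sq hw0m.aestronglyMeasurable).2 hw0sq
  have hw1L2 : MemLp w1 2 μ :=
    (memLp_two_iff_integrable_sq hw1m.aestronglyMeasurable).2 hw1sq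
  have hw0int : Integrable w0 μ := hw0L2.integrable one_le_two
  have hw1int : Integrable w1 μ := hw1L2.integrable one_le_two
  -- the function F of the noises
  set F : ℝ × ℝ → ℝ := fun p =>
    (1 + S + S * p.1) ^ 2 * (1 + S + S * p.2) ^ 2 - 2 * S ^ 2
      - 2 * S ^ 2 * (1 + S + S * p.1) ^ 2 with hF
  have hFm : Measurable F := by
    unfold F; fun_prop
  -- the feedback cost integrand factorizes
  have hkey : (fun ω => ((x2 w0 w1 x0 (fun ω => S * x0 ω)
        (fun ω => S * x1 w0 x0 (fun ω' => S * x0 ω') ω) ω) ^ 2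
        - 2 * (S * x0 ω) ^ 2 - 2 * (S * x1 w0 x0 (fun ω' => S * x0 ω') ω) ^ 2))
      = fun ω => ((fun x : ℝ => x ^ 2) ∘ x0) ω * (F ∘ (fun ω => (w0 ω, w1 ω))) ω := by
    funext ω
    simp only [x2, x1, Function.comp, hF]
    ring
  have hindF : IndepFun ((fun x : ℝ => x ^ 2) ∘ x0) (F ∘ (fun ω => (w0 ω, w1 ω))) μ :=
    hindx.comp (measurable_id.pow_const 2) hFm
  have hJfeed : J μ w0 w1 x0 (fun ω => S * x0 ω)
      (fun ω => S * x1 w0 x0 (fun ω' => S * x0 ω') ω)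
      = (∫ ω, (x0 ω) ^ 2 ∂μ) * ∫ ω, F (w0 ω, w1 ω) ∂μ := by
    rw [J]
    rw [show (fun ω => ((x2 w0 w1 x0 (fun ω => S * x0 ω)
        (fun ω => S * x1 w0 x0 (fun ω' => S * x0 ω') ω) ω) ^ 2
        - 2 * (S * x0 ω) ^ 2 - 2 * (S * x1 w0 x0 (fun ω' => S * x0 ω') ω) ^ 2)) = _ from hkey]
    exact hindF.integral_fun_mul_eq_mul_integral ((hx0m.pow_const 2).aestronglyMeasurable)
      ((hFm.comp (hw0m.prodMk hw1m)).aestronglyMeasurable)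
  -- compute the expectation of F
  have hg0 : Integrable (fun ω => (1 + S + S * w0 ω) ^ 2) μ :=
    sq_aff_integrable μ w0 hw0int hw0sq S
  have hg1 : Integrable (fun ω => (1 + S + S * w1 ω) ^ 2) μ :=
    sq_aff_integrable μ w1 hw1int hw1sq S
  have hq : Measurable (fun x : ℝ => (1 + S + S * x) ^ 2) := by fun_prop
  have hindg : IndepFun (fun ω => (1 + S + S * w0 ω) ^ 2)
      (fun ω => (1 + S + S * w1 ω) ^ 2) μ := hindw.comp hq hq
  have hprod : Integrable (fun ω => (1 + S + S * w0 ω) ^ 2 * (1 + S + S * w1 ω) ^ 2) μ :=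
    hindg.integrable_mul hg0 hg1
  have hEprod : ∫ ω, (1 + S + S * w0 ω) ^ 2 * (1 + S + S * w1 ω) ^ 2 ∂μ
      = (1 + 2 * S + 2 * S ^ 2) * (1 + 2 * S + 2 * S ^ 2) := by
    rw [hindg.integral_fun_mul_eq_mul_integral hg0.aestronglyMeasurable hg1.aestronglyMeasurable,
      sq_aff_integral μ w0 hw0int hw0sq hw0mean hw0var S,
      sq_aff_integral μ w1 hw1int hw1sq hw1mean hw1var S]
  have hEF : ∫ ω, F (w0 ω, w1 ω) ∂μ = 4 * S ^ 3 + 4 * S ^ 2 + 4 * S + 1 := by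
    have e1 : ∫ ω, F (w0 ω, w1 ω) ∂μ
        = (∫ ω, ((1 + S + S * w0 ω) ^ 2 * (1 + S + S * w1 ω) ^ 2 - 2 * S ^ 2) ∂μ)
          - ∫ ω, 2 * S ^ 2 * (1 + S + S * w0 ω) ^ 2 ∂μ :=
      integral_sub (hprod.sub (integrable_const _)) (hg0.const_mul _)
    have e2 : ∫ ω, ((1 + S + S * w0 ω) ^ 2 * (1 + S + S * w1 ω) ^ 2 - 2 * S ^ 2) ∂μ
        = (∫ ω, (1 + S + S * w0 ω) ^ 2 * (1 + S + S * w1 ω) ^ 2 ∂μ)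
          - ∫ _ω, (2 * S ^ 2 : ℝ) ∂μ :=
      integral_sub hprod (integrable_const _)
    rw [e1, e2, hEprod, integral_const, integral_const_mul, sq_aff_integral μ w0 hw0int hw0sq hw0mean hw0var S]
    simp
    ring
  -- zero control cost
  have hJzero : J μ w0 w1 x0 (fun _ => 0) (fun _ => 0) = ∫ ω, (x0 ω) ^ 2 ∂μ := by
    rw [J]
    exact integral_congr_ae (Filter.Eventually.of_forall fun ω => by simp [x2, x1])
  have hfeed : J μ w0 w1 x0 (fun ω => S * x0 ω)
      (fun ω => S * x1 w0 x0 (fun ω' => S * x0 ω') ω)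
      = (4 * S ^ 3 + 4 * S ^ 2 + 4 * S + 1) * ∫ ω, (x0 ω) ^ 2 ∂μ := by
    rw [hJfeed, hEF, mul_comm]
  refine ⟨hfeed, fun hroot => by rw [hfeed, hroot, zero_mul], hJzero, fun hroot hpos => ?_⟩
  rw [hfeed, hroot, zero_mul, hJzero]
  exact hpos

end SLQExample
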